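/- The curl operator, restricted to the subspace x ∧ [P_{n}(ℝ³)]³ of vector polynomials (cross products of the position vector with vector polynomials of degree at most n), is injective; hence it is an isomorphism onto its image, which is the space of divergence-free vector polynomials of degree at most n. -/

import Mathlib

open MvPolynomial

noncomputable section

abbrev Poly3 := MvPolynomial (Fin 3) ℝ

/-- Curl of a vector polynomial. -/
def pcurl (v : Fin 3 → Poly3) : Fin 3 → Poly3 :=
  ![pderiv 1 (v 2) - pderiv 2 (v 1),
    pderiv 2 (v 0) - pderiv 0 (v 2),
    pderiv 0 (v 1) - pderiv 1 (v 0)]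

/-- Divergence of a vector polynomial. -/
def pdiv (v : Fin 3 → Poly3) : Poly3 := ∑ i, pderiv i (v i)

/-- Cross product `x ∧ p` of the position vector with a vector polynomial. -/
def xcross (p : Fin 3 → Poly3) : Fin 3 → Poly3 :=
  ![X 1 * p 2 - X 2 * p 1,
    X 2 * p 0 - X 0 * p 2,
    X 0 * p 1 - X 1 * p 0]

/-- degree of a monomial exponent -/
def dg (m : Fin 3 →₀ ℕ) : ℕ := m.sum fun _ e => e

lemma dg_add_single (m : Fin 3 →₀ ℕ) (i : Fin 3) :
    dg (m + Finsupp.single i 1) = dg m + 1 := by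
  unfold dg
  rw [Finsupp.sum_add_index' (fun _ => rfl) (fun _ _ _ => rfl), Finsupp.sum_single_index rfl]

lemma coeff_pderiv (i : Fin 3) (p : Poly3) (m : Fin 3 →₀ ℕ) :
    coeff m (pderiv i p) = (m i + 1 : ℝ) * coeff (m + Finsupp.single i 1) p := by
  induction p using MvPolynomial.induction_on' with
  | add p q hp hq => simp [map_add, coeff_add, hp, hq, mul_add]
  | monomial s a =>
    rw [pderiv_monomial, coeff_monomial, coeff_monomial]
    by_cases h : s = m + Finsupp.single i 1
    · subst h
      have h1 : m + Finsupp.single i 1 - Finsupp.single i 1 = m := by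
        ext j; simp [Finsupp.tsub_apply]
      have h2 : ((m + Finsupp.single i 1 : Fin 3 →₀ ℕ)) i = m i + 1 := by
        rw [Finsupp.add_apply, Finsupp.single_eq_same]
      rw [if_pos h1, h2]
      simp only [if_true]; push_cast; ring
    · rw [if_neg h]
      by_cases h2 : s - Finsupp.single i 1 = m
      · rw [if_pos h2]
        have hsi : s i = 0 := by
          by_contra hsi
          apply h
          ext j
          have hj := congrFun (congrArg (fun f : Fin 3 →₀ ℕ => (f : Fin 3 → ℕ)) h2) j
          simp only [Finsupp.tsub_apply, Finsupp.coe_add, Pi.add_apply,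
            Finsupp.single_apply] at hj ⊢
          by_cases hji : j = i
          · subst hji; simp at hj ⊢; omega
          · simp [Ne.symm hji] at hj ⊢; omega
        simp [hsi]
      · rw [if_neg h2]; ring

/-- Euler operator `x · ∇`. -/
def euler (p : Poly3) : Poly3 := ∑ i, X i * pderiv i p

lemma coeff_X_mul_self (i : Fin 3) (p : Poly3) (m : Fin 3 →₀ ℕ) :
    coeff m (X i * p) * (1 : ℝ) = coeff m (X i * p) := mul_one _

lemma coeff_X_mul_pderiv (i : Fin 3) (p : Poly3) (m : Fin 3 →₀ ℕ) :
    coeff m (X i * pderiv i p) = (m i : ℝ) * coeff m p := by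
  classical
  rw [coeff_X_mul']
  by_cases h : i ∈ m.support
  · rw [if_pos h]
    rw [coeff_pderiv]
    have hmi : m i ≠ 0 := Finsupp.mem_support_iff.mp h
    have h1 : m - Finsupp.single i 1 + Finsupp.single i 1 = m := by
      ext j
      simp only [Finsupp.coe_add, Pi.add_apply, Finsupp.tsub_apply, Finsupp.single_apply]
      by_cases hj : j = i
      · subst hj; simp; omega
      · simp [Ne.symm hj]
    have h2 : ((m - Finsupp.single i 1 : Fin 3 →₀ ℕ)) i = m i - 1 := by
      rw [Finsupp.tsub_apply, Finsupp.single_eq_same]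
    rw [h1, h2]
    congr 1
    push_cast [Nat.cast_sub (Nat.one_le_iff_ne_zero.mpr hmi)]
    ring
  · rw [if_neg h]
    have hmi : m i = 0 := by simpa using h
    rw [hmi]; simp

lemma coeff_euler (p : Poly3) (m : Fin 3 →₀ ℕ) :
    coeff m (euler p) = (dg m : ℝ) * coeff m p := by
  unfold euler
  rw [coeff_sum]
  simp only [coeff_X_mul_pderiv]
  rw [← Finset.sum_mul]
  congr 1
  unfold dg
  rw [Finsupp.sum_fintype _ _ (fun _ => rfl)]
  push_cast
  rfl

lemma pderiv_X_ne {i j : Fin 3} (h : j ≠ i) : pderiv i (X j : Poly3) = 0 :=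
  pderiv_X_of_ne h

lemma grad_xdot (w : Fin 3 → Poly3) (i : Fin 3) :
    pderiv i (∑ j, X j * w j) = w i + euler (w i) + (xcross (pcurl w)) i := by
  fin_cases i <;>
  · simp [euler, pcurl, xcross, Fin.sum_univ_three, pderiv_mul, pderiv_X_self,
      pderiv_X_of_ne, map_sub, Fin.isValue]
    ring

lemma xdot_xcross (t : Fin 3 → Poly3) : (∑ j, X j * xcross t j) = 0 := by
  simp [xcross, Fin.sum_univ_three]
  ring

lemma pcurl_xcross_eq (r : Fin 3 → Poly3) (i : Fin 3) :
    pcurl (xcross r) i = X i * pdiv r - (C 2 * r i + euler (r i)) := by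
  fin_cases i <;>
  · simp [euler, pcurl, xcross, pdiv, Fin.sum_univ_three, pderiv_mul, pderiv_X_self,
      pderiv_X_of_ne, map_sub, Fin.isValue]
    ring_nf
    rw [show ((2:Poly3) = C 2) from (map_ofNat C 2).symm]

lemma eq_zero_of_add_euler (p : Poly3) (h : p + euler p = 0) : p = 0 := by
  ext m
  have hm := congrArg (coeff m) h
  rw [coeff_add, coeff_euler, coeff_zero] at hm
  have hne : (1 + (dg m : ℝ)) ≠ 0 := by positivity
  have : (1 + (dg m : ℝ)) * coeff m p = 0 := by linarith
  simpa [coeff_zero] using (mul_eq_zero.mp this).resolve_left hne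

lemma xcross_pcurl_zero (t : Fin 3 → Poly3) (h : pcurl (xcross t) = 0) :
    xcross t = 0 := by
  funext i
  have hg := grad_xdot (xcross t) i
  rw [xdot_xcross, h, map_zero] at hg
  have hx0 : xcross (0 : Fin 3 → Poly3) i = 0 := by
    fin_cases i <;> simp [xcross]
  rw [hx0, add_zero] at hg
  exact eq_zero_of_add_euler _ hg.symm

lemma pderiv_comm' (i j : Fin 3) (p : Poly3) :
    pderiv i (pderiv j p) = pderiv j (pderiv i p) := by
  ext m
  rw [coeff_pderiv, coeff_pderiv, coeff_pderiv, coeff_pderiv, add_right_comm]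
  by_cases h : i = j
  · subst h; ring
  · have h1 : ((m + Finsupp.single i 1 : Fin 3 →₀ ℕ)) j = m j := by
      rw [Finsupp.add_apply, Finsupp.single_apply, if_neg h, add_zero]
    have h2 : ((m + Finsupp.single j 1 : Fin 3 →₀ ℕ)) i = m i := by
      rw [Finsupp.add_apply, Finsupp.single_apply, if_neg (Ne.symm h), add_zero]
    rw [h1, h2]; ring

lemma pdiv_pcurl (v : Fin 3 → Poly3) : pdiv (pcurl v) = 0 := by
  simp only [pdiv, pcurl, Fin.sum_univ_three, Matrix.cons_val_zero, Matrix.cons_val_one,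
    Matrix.head_cons, Matrix.cons_val_two, Matrix.tail_cons, map_sub]
  rw [pderiv_comm' 0 1, pderiv_comm' 0 2, pderiv_comm' 1 2]
  ring

lemma xcross_sub (r s : Fin 3 → Poly3) (j : Fin 3) :
    xcross (fun i => r i - s i) j = xcross r j - xcross s j := by
  fin_cases j <;> (simp [xcross]; ring)

lemma pcurl_sub (a b : Fin 3 → Poly3) (k : Fin 3) :
    pcurl (fun j => a j - b j) k = pcurl a k - pcurl b k := by
  fin_cases k <;> (simp [pcurl, map_sub]; ring)

/-- The inverse of `2 + E` on coefficients. -/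
def smooth (p : Poly3) : Poly3 :=
  ∑ m ∈ p.support, monomial m (p.coeff m / (2 + (dg m : ℝ)))

lemma coeff_smooth (p : Poly3) (m : Fin 3 →₀ ℕ) :
    coeff m (smooth p) = coeff m p / (2 + (dg m : ℝ)) := by
  classical
  unfold smooth
  rw [coeff_sum]
  simp only [coeff_monomial]
  rw [Finset.sum_ite_eq' p.support m (fun m' => p.coeff m' / (2 + (dg m' : ℝ)))]
  by_cases h : m ∈ p.support
  · rw [if_pos h]
  · rw [if_neg h]
    rw [notMem_support_iff.mp h, zero_div]

lemma smooth_support (p : Poly3) : (smooth p).support ⊆ p.support := by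
  intro m hm
  rw [mem_support_iff] at hm ⊢
  intro h
  rw [coeff_smooth, h, zero_div] at hm
  exact hm rfl

lemma smooth_spec (p : Poly3) : C 2 * smooth p + euler (smooth p) = p := by
  ext m
  rw [coeff_add, coeff_C_mul, coeff_euler, coeff_smooth]
  have hne : (2 + (dg m : ℝ)) ≠ 0 := by positivity
  field_simp

lemma coeff_pdiv (v : Fin 3 → Poly3) (m : Fin 3 →₀ ℕ) :
    coeff m (pdiv v) = ∑ i, ((m i : ℝ) + 1) * coeff (m + Finsupp.single i 1) (v i) := by
  unfold pdiv
  rw [coeff_sum]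
  exact Finset.sum_congr rfl fun i _ => coeff_pderiv i (v i) m

lemma pdiv_smooth (u : Fin 3 → Poly3) (h : pdiv u = 0) :
    pdiv (fun i => smooth (u i)) = 0 := by
  ext m
  rw [coeff_pdiv, coeff_zero]
  have h2 : ∀ i : Fin 3, coeff (m + Finsupp.single i 1) (smooth (u i))
      = coeff (m + Finsupp.single i 1) (u i) / (2 + ((dg m : ℝ) + 1)) := by
    intro i
    rw [coeff_smooth, dg_add_single]
    push_cast; ring_nf
  simp only [h2, ← mul_div_assoc]
  rw [← Finset.sum_div]
  have hdu := congrArg (coeff m) h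
  rw [coeff_pdiv, coeff_zero] at hdu
  rw [hdu, zero_div]


lemma totalDegree_pderiv_le (j : Fin 3) (q : Poly3) {k : ℕ} (h : q.totalDegree ≤ k + 1) :
    (pderiv j q).totalDegree ≤ k := by
  rw [totalDegree]
  apply Finset.sup_le
  intro m hm
  have hc : coeff m (pderiv j q) ≠ 0 := mem_support_iff.mp hm
  rw [coeff_pderiv] at hc
  have hc2 : coeff (m + Finsupp.single j 1) q ≠ 0 := right_ne_zero_of_mul hc
  have hle : ((m + Finsupp.single j 1 : Fin 3 →₀ ℕ).sum fun _ e => e) ≤ q.totalDegree :=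
    le_totalDegree (mem_support_iff.mpr hc2)
  have hdg : ((m + Finsupp.single j 1 : Fin 3 →₀ ℕ).sum fun _ e => e) = dg m + 1 :=
    dg_add_single m j
  have : (m.sum fun _ e => e) = dg m := rfl
  omega

lemma deg_xcross (r : Fin 3 → Poly3) (n : ℕ) (hr : ∀ i, (r i).totalDegree ≤ n) (j : Fin 3) :
    (xcross r j).totalDegree ≤ n + 1 := by
  have key : ∀ a b c d : Fin 3, (X a * r b - X c * r d).totalDegree ≤ n + 1 := by
    intro a b c d
    refine le_trans (totalDegree_sub _ _) (max_le ?_ ?_) <;>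
      refine le_trans (totalDegree_mul _ _) ?_ <;>
      · rw [totalDegree_X]
        have := hr b; have := hr d; omega
  fin_cases j <;> simpa [xcross] using key _ _ _ _

lemma deg_pcurl (w : Fin 3 → Poly3) (n : ℕ) (hw : ∀ j, (w j).totalDegree ≤ n + 1)
    (i : Fin 3) : (pcurl w i).totalDegree ≤ n := by
  have key : ∀ a b c d : Fin 3, (pderiv a (w b) - pderiv c (w d)).totalDegree ≤ n := by
    intro a b c d
    refine le_trans (totalDegree_sub _ _) (max_le ?_ ?_) <;>
      exact totalDegree_pderiv_le _ _ (hw _)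
  fin_cases i <;> simpa [pcurl] using key _ _ _ _

lemma pdiv_neg (v : Fin 3 → Poly3) : pdiv (fun i => -(v i)) = - pdiv v := by
  simp [pdiv, map_neg, Finset.sum_neg_distrib]

lemma euler_neg (q : Poly3) : euler (-q) = - euler q := by
  simp [euler, map_neg, mul_neg, Finset.sum_neg_distrib]

/-- The curl operator restricted to `x ∧ [P_n(ℝ³)]³` is injective, and its image is
the space of divergence-free vector polynomials of degree at most `n`. -/
theorem pcurl_injective_on_xcross (n : ℕ) :
    (∀ r s : Fin 3 → Poly3, (∀ i, (r i).totalDegree ≤ n) → (∀ i, (s i).totalDegree ≤ n) →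
        pcurl (xcross r) = pcurl (xcross s) → xcross r = xcross s) ∧
    {u : Fin 3 → Poly3 |
        ∃ r : Fin 3 → Poly3, (∀ i, (r i).totalDegree ≤ n) ∧ u = pcurl (xcross r)}
      = {u : Fin 3 → Poly3 | (∀ i, (u i).totalDegree ≤ n) ∧ pdiv u = 0} := by
  constructor
  · intro r s hr hs h
    have h0 : pcurl (xcross (fun i => r i - s i)) = 0 := by
      funext k
      rw [show xcross (fun i => r i - s i) = fun j => xcross r j - xcross s j from
        funext (xcross_sub r s)]
      rw [pcurl_sub, h, sub_self]
      rfl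
    have hz := xcross_pcurl_zero _ h0
    funext j
    have hj := congrFun hz j
    rw [xcross_sub] at hj
    exact sub_eq_zero.mp (by simpa using hj)
  · ext u
    simp only [Set.mem_setOf_eq]
    constructor
    · rintro ⟨r, hr, rfl⟩
      exact ⟨fun i => deg_pcurl _ n (deg_xcross r n hr) i, pdiv_pcurl _⟩
    · rintro ⟨hdeg, hdiv⟩
      refine ⟨fun i => -(smooth (u i)), fun i => ?_, ?_⟩
      · rw [totalDegree_neg]
        exact le_trans (totalDegree_le_of_support_subset (smooth_support _)) (hdeg i)
      · funext i
        rw [pcurl_xcross_eq]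
        rw [show pdiv (fun i => -(smooth (u i))) = 0 by
          rw [pdiv_neg, pdiv_smooth u hdiv, neg_zero]]
        rw [mul_zero, euler_neg, zero_sub]
        linear_combination (smooth_spec (u i)).symm
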